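/- For any language L ⊆ Σ^ω, the following are equivalent: (1) L is monitorable and deterministic ω-regular (i.e. L has a monitor and L is accepted by some deterministic Büchi automaton); (2) there exists a deterministic Büchi monitor (DBM) for L, i.e. a tuple (Q, Σ, δ, q₀, F, ⊥, ⊤) such that (Q, Σ, δ, q₀, F) is a deterministic Büchi automaton accepting L and (Q, Σ, δ, q₀, ⊥, ⊤) is a monitor for L. -/

import Mathlib

/-- Concatenation of a finite word with an infinite word. -/
def cat {A : Type*} (x : List A) (α : ℕ → A) : ℕ → A :=
  fun n => if h : n < x.length then x[n] else α (n - x.length)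

/-- A monitor: a finite deterministic transition system with designated
absorbing states `⊥` (bot) and `⊤` (top), at least one of which is present,
such that from every state some present sink is reachable. -/
structure Monitor (A : Type*) where
  Q : Type
  finQ : Finite Q
  δ : Q → A → Q
  init : Q
  bot : Option Q
  top : Option Q
  sink_exists : bot.isSome ∨ top.isSome
  bot_ne_top : ∀ p q, bot = some p → top = some q → p ≠ q
  bot_absorb : ∀ p a, bot = some p → δ p a = p
  top_absorb : ∀ p a, top = some p → δ p a = p
  reach : ∀ q : Q, ∃ w : List A, bot = some (w.foldl δ q) ∨ top = some (w.foldl δ q)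

/-- `M` is a monitor for the language `L ⊆ Σ^ω`: whenever the run from the
initial state on a finite word `u` reaches `⊥` then `uΣ^ω ∩ L = ∅`, and
whenever it reaches `⊤` then `uΣ^ω ⊆ L`. -/
def Monitor.IsMonitorFor {A : Type*} (M : Monitor A) (L : Set (ℕ → A)) : Prop :=
  ∀ u : List A,
    (M.bot = some (u.foldl M.δ M.init) → ∀ α, cat u α ∉ L) ∧
    (M.top = some (u.foldl M.δ M.init) → ∀ α, cat u α ∈ L)

/-- A language is monitorable if some monitor for it exists. -/
def Monitorable {A : Type*} (L : Set (ℕ → A)) : Prop :=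
  ∃ M : Monitor A, M.IsMonitorFor L

/-- Deterministic Büchi automaton: partial transition function, unique initial state. -/
structure DBA (A : Type*) where
  Q : Type
  finQ : Finite Q
  δ : Q → A → Option Q
  init : Q
  F : Set Q

/-- `D` accepts `α` if the run on `α` from the initial state is infinite and
visits `F` infinitely often. -/
def DBA.Accepts {A : Type*} (D : DBA A) (α : ℕ → A) : Prop :=
  ∃ ρ : ℕ → D.Q, ρ 0 = D.init ∧ (∀ n, D.δ (ρ n) (α n) = some (ρ (n + 1))) ∧
    ∀ n, ∃ m, n ≤ m ∧ ρ m ∈ D.F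

def DBA.Lang {A : Type*} (D : DBA A) : Set (ℕ → A) := {α | D.Accepts α}

section Aux

variable {A : Type*} (M : Monitor A) (D : DBA A)

open Classical in
/-- Product step function: monitor component plus (partial) Büchi component,
killing the Büchi component upon entering a sink of the monitor. -/
noncomputable def mstep : M.Q × Option D.Q → A → M.Q × Option D.Q :=
  fun p a =>
    (M.δ p.1 a,
      if M.bot = some (M.δ p.1 a) ∨ M.top = some (M.δ p.1 a) then none
      else p.2.bind fun s => D.δ s a)

lemma mstep_fst (p : M.Q × Option D.Q) (a : A) : (mstep M D p a).1 = M.δ p.1 a := rfl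

lemma mstep_sink (p : M.Q × Option D.Q) (a : A)
    (h : M.bot = some (M.δ p.1 a) ∨ M.top = some (M.δ p.1 a)) :
    mstep M D p a = (M.δ p.1 a, none) := by
  simp only [mstep]
  rw [if_pos h]

lemma mstep_nosink (p : M.Q × Option D.Q) (a : A)
    (h : ¬(M.bot = some (M.δ p.1 a) ∨ M.top = some (M.δ p.1 a))) :
    mstep M D p a = (M.δ p.1 a, p.2.bind fun s => D.δ s a) := by
  simp only [mstep]
  rw [if_neg h]

lemma foldl_mstep_fst (w : List A) (p : M.Q × Option D.Q) :
    (w.foldl (mstep M D) p).1 = w.foldl M.δ p.1 := by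
  induction w generalizing p with
  | nil => rfl
  | cons a w ih => exact ih (mstep M D p a)

lemma mstep_none (p : M.Q × Option D.Q) (a : A) (h : p.2 = none) :
    (mstep M D p a).2 = none := by
  by_cases hc : M.bot = some (M.δ p.1 a) ∨ M.top = some (M.δ p.1 a)
  · rw [mstep_sink M D p a hc]
  · rw [mstep_nosink M D p a hc, h]
    rfl

/-- The product monitor. -/
noncomputable def combo [Nonempty A] : Monitor A where
  Q := M.Q × Option D.Q
  finQ := by
    haveI := M.finQ
    haveI := D.finQ
    haveI := Fintype.ofFinite M.Q
    haveI := Fintype.ofFinite D.Q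
    infer_instance
  δ := mstep M D
  init := (M.init, some D.init)
  bot := M.bot.map (·, none)
  top := M.top.map (·, none)
  sink_exists := by
    rcases M.sink_exists with h | h
    · left; simpa using h
    · right; simpa using h
  bot_ne_top := by
    rintro p q hp hq
    rw [Option.map_eq_some_iff] at hp hq
    obtain ⟨b, hb, rfl⟩ := hp
    obtain ⟨t, ht, rfl⟩ := hq
    intro h
    exact M.bot_ne_top b t hb ht (congrArg Prod.fst h)
  bot_absorb := by
    rintro p a hp
    rw [Option.map_eq_some_iff] at hp
    obtain ⟨b, hb, rfl⟩ := hp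
    have hba : M.δ b a = b := M.bot_absorb b a hb
    have := mstep_sink M D (b, none) a (by rw [show M.δ (b, none).1 a = b from hba]; exact Or.inl hb)
    rw [this, hba]
  top_absorb := by
    rintro p a hp
    rw [Option.map_eq_some_iff] at hp
    obtain ⟨t, ht, rfl⟩ := hp
    have hta : M.δ t a = t := M.top_absorb t a ht
    have := mstep_sink M D (t, none) a (by rw [show M.δ (t, none).1 a = t from hta]; exact Or.inr ht)
    rw [this, hta]
  reach := by
    intro q
    obtain ⟨w, hw⟩ := M.reach q.1
    obtain ⟨a⟩ := ‹Nonempty A›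
    refine ⟨w ++ [a], ?_⟩
    have hfst : (w.foldl (mstep M D) q).1 = w.foldl M.δ q.1 := foldl_mstep_fst M D w q
    set s := w.foldl M.δ q.1 with hs
    have habs : M.δ s a = s := by
      rcases hw with h | h
      · exact M.bot_absorb s a h
      · exact M.top_absorb s a h
    have hstep : (w ++ [a]).foldl (mstep M D) q = (s, none) := by
      rw [List.foldl_append, List.foldl_cons, List.foldl_nil]
      have := mstep_sink M D (w.foldl (mstep M D) q) a
        (by rw [hfst, habs]; rcases hw with h | h
            · exact Or.inl h
            · exact Or.inr h)
      rw [this, hfst, habs]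
    rw [hstep]
    rcases hw with h | h
    · left; rw [h]; rfl
    · right; rw [h]; rfl

variable (α : ℕ → A)

/-- The length-`n` prefix of `α` as a finite word. -/
def pre (n : ℕ) : List A := (List.range n).map α

lemma pre_succ (n : ℕ) : pre α (n + 1) = pre α n ++ [α n] := by
  simp [pre, List.range_succ]

lemma cat_pre (n : ℕ) : cat (pre α n) (fun k => α (k + n)) = α := by
  funext m
  have hlen : (pre α n).length = n := by simp [pre]
  by_cases h : m < n
  · have h' : m < (pre α n).length := by rwa [hlen]
    rw [cat, dif_pos h']
    simp [pre]
  · have h' : ¬ m < (pre α n).length := by rwa [hlen]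
    rw [cat, dif_neg h']
    rw [hlen, Nat.sub_add_cancel (Nat.le_of_not_lt h)]

end Aux

/-- `L` is monitorable and deterministic ω-regular iff there is a deterministic
Büchi monitor for `L`, i.e. a monitor `M` for `L` together with final states `F`
such that the deterministic Büchi automaton with the same (total) transition
function, initial state and final states `F` accepts `L`. -/
theorem stmt12 {A : Type*} [Fintype A] (L : Set (ℕ → A)) :
    (Monitorable L ∧ ∃ D : DBA A, D.Lang = L) ↔
      ∃ (M : Monitor A) (F : Set M.Q), M.IsMonitorFor L ∧
        (DBA.mk M.Q M.finQ (fun q a => some (M.δ q a)) M.init F).Lang = L := by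
  constructor
  · rintro ⟨⟨M, hM⟩, D, hD⟩
    rcases isEmpty_or_nonempty A with hA | hA
    · refine ⟨⟨PUnit, inferInstance, fun q _ => q, PUnit.unit, some PUnit.unit, none,
        Or.inl rfl, ?_, ?_, ?_, ?_⟩, ∅, ?_, ?_⟩
      · intro p q _ hq; exact nomatch hq
      · intro p a _; rfl
      · intro p a hp; exact nomatch hp
      · intro q; exact ⟨[], Or.inl (by cases q; rfl)⟩
      · intro u
        constructor
        · intro _ β; exact (hA.false (β 0)).elim
        · intro h; exact (Option.some_ne_none _ h.symm).elim
      · ext β; exact (hA.false (β 0)).elim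
    · -- main case
      refine ⟨combo M D,
        {p | (∃ q, p.2 = some q ∧ q ∈ D.F) ∨ (M.top = some p.1 ∧ p.2 = none)}, ?_, ?_⟩
      · -- the product is a monitor for L
        intro u
        constructor
        · intro h β
          have h' : M.bot = some ((u.foldl (mstep M D) (M.init, some D.init)).1) := by
            have hmap : (combo M D).bot = M.bot.map (·, none) := rfl
            rw [hmap] at h; replace h := Option.map_eq_some_iff.mp h
            obtain ⟨b, hb, heq⟩ := h
            have heq' : ((b, none) : M.Q × Option D.Q)
                = u.foldl (mstep M D) (M.init, some D.init) := heq
            rw [← heq']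
            exact hb
          rw [foldl_mstep_fst] at h'
          exact (hM u).1 h' β
        · intro h β
          have h' : M.top = some ((u.foldl (mstep M D) (M.init, some D.init)).1) := by
            have hmap : (combo M D).top = M.top.map (·, none) := rfl
            rw [hmap] at h; replace h := Option.map_eq_some_iff.mp h
            obtain ⟨t, ht, heq⟩ := h
            have heq' : ((t, none) : M.Q × Option D.Q)
                = u.foldl (mstep M D) (M.init, some D.init) := heq
            rw [← heq']
            exact ht
          rw [foldl_mstep_fst] at h'
          exact (hM u).2 h' β
      · -- language equality
        ext α
        set σ : ℕ → M.Q × Option D.Q :=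
          fun n => (pre α n).foldl (mstep M D) (M.init, some D.init) with hσdef
        have hσs : ∀ n : ℕ, σ (n+1) = mstep M D (σ n) (α n) := by
          intro n
          show (pre α (n+1)).foldl (mstep M D) (M.init, some D.init)
            = mstep M D ((pre α n).foldl (mstep M D) (M.init, some D.init)) (α n)
          rw [pre_succ, List.foldl_append, List.foldl_cons, List.foldl_nil]
        have hfst : ∀ n, (σ n).1 = (pre α n).foldl M.δ M.init := by
          intro n; exact foldl_mstep_fst M D (pre α n) (M.init, some D.init)
        constructor
        · rintro ⟨ρ, hρ0, hρs, hρF⟩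
          have hρσ : ∀ n, ρ n = σ n := by
            intro n
            induction n with
            | zero => rw [hρ0]; rfl
            | succ n ih =>
              have hst := hρs n
              rw [ih] at hst
              have : some (mstep M D (σ n) (α n)) = some (ρ (n+1)) := hst
              have := Option.some.inj this
              rw [← this, hσs n]
          by_cases Htop : ∃ n, M.top = some ((σ n).1)
          · obtain ⟨n, hn⟩ := Htop
            have := (hM (pre α n)).2 (by rw [← hfst n]; exact hn) (fun k => α (k + n))
            rwa [cat_pre] at this
          · have hnone : ∀ n m, (σ n).2 = none → (σ (n+m)).2 = none := by
              intro n m h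
              induction m with
              | zero => exact h
              | succ m ih =>
                have : n + (m+1) = (n+m) + 1 := rfl
                rw [this, hσs (n+m)]
                exact mstep_none M D _ _ ih
            have hsome : ∀ n, ∃ q, (σ n).2 = some q := by
              intro n
              rcases h2 : (σ n).2 with _ | q
              · exfalso
                obtain ⟨m, hm, hmF⟩ := hρF n
                rw [hρσ m] at hmF
                rcases hmF with ⟨q, hq, _⟩ | ⟨ht, _⟩
                · have hmn : (σ m).2 = none := by
                    have := hnone n (m - n) h2
                    rwa [Nat.add_sub_cancel' hm] at this
                  rw [hmn] at hq
                  exact nomatch hq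
                · exact Htop ⟨m, ht⟩
              · exact ⟨q, rfl⟩
            choose ρ' hρ' using hsome
            have hstep : ∀ n, D.δ (ρ' n) (α n) = some (ρ' (n+1)) := by
              intro n
              by_cases hc : M.bot = some (M.δ (σ n).1 (α n)) ∨ M.top = some (M.δ (σ n).1 (α n))
              · exfalso
                have h1 : (σ (n+1)).2 = none := by
                  rw [hσs n, mstep_sink M D _ _ hc]
                rw [hρ' (n+1)] at h1
                exact nomatch h1
              · have h2 : (σ (n+1)).2 = (σ n).2.bind fun s => D.δ s (α n) := by
                  rw [hσs n, mstep_nosink M D _ _ hc]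
                rw [hρ' n, hρ' (n+1)] at h2
                simpa using h2.symm
            rw [← hD]
            refine ⟨ρ', ?_, hstep, ?_⟩
            · have h0 : (σ 0).2 = some D.init := rfl
              rw [hρ' 0] at h0
              exact Option.some.inj h0
            · intro n
              obtain ⟨m, hm, hmF⟩ := hρF n
              rw [hρσ m] at hmF
              rcases hmF with ⟨q, hq, hqF⟩ | ⟨ht, _⟩
              · refine ⟨m, hm, ?_⟩
                rw [hρ' m] at hq
                rwa [Option.some.inj hq]
              · exact absurd ⟨m, ht⟩ Htop
        · intro hα
          obtain ⟨ρ, hρ0, hρs, hρF⟩ : D.Accepts α := by rw [← hD] at hα; exact hα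
          refine ⟨σ, rfl, fun n => congrArg some (hσs n).symm, ?_⟩
          by_cases H : ∃ n, M.bot = some ((σ n).1) ∨ M.top = some ((σ n).1)
          · obtain ⟨n, hn⟩ := H
            rcases hn with hb | ht
            · exfalso
              have := (hM (pre α n)).1 (by rw [← hfst n]; exact hb) (fun k => α (k + n))
              rw [cat_pre] at this
              exact this hα
            · have habs : ∀ j, σ (n+1+j) = ((σ n).1, none) := by
                intro j
                induction j with
                | zero =>
                  have hta : M.δ (σ n).1 (α n) = (σ n).1 := M.top_absorb _ _ ht
                  have := mstep_sink M D (σ n) (α n) (Or.inr (by rw [hta]; exact ht))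
                  show σ (n+1) = _
                  rw [hσs n, this, hta]
                | succ j ih =>
                  have hrw : n+1+(j+1) = (n+1+j) + 1 := rfl
                  have hta : M.δ ((σ n).1, (none : Option D.Q)).1 (α (n+1+j)) = (σ n).1 :=
                    M.top_absorb _ _ ht
                  rw [hrw, hσs (n+1+j), ih,
                    mstep_sink M D _ _ (Or.inr (by rw [hta]; exact ht)), hta]
              intro k
              refine ⟨n+1+k, by omega, Or.inr ⟨?_, ?_⟩⟩
              · rw [habs k]; exact ht
              · rw [habs k]
          · push_neg at H
            have htrack : ∀ n, (σ n).2 = some (ρ n) := by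
              intro n
              induction n with
              | zero => rw [hρ0]; rfl
              | succ n ih =>
                have hc : ¬(M.bot = some (M.δ (σ n).1 (α n)) ∨
                    M.top = some (M.δ (σ n).1 (α n))) := by
                  have h1 : (σ (n+1)).1 = M.δ (σ n).1 (α n) := by
                    rw [hσs n]; rfl
                  rw [← h1]
                  rintro (h | h)
                  · exact (H (n+1)).1 h
                  · exact (H (n+1)).2 h
                rw [hσs n, mstep_nosink M D _ _ hc]
                show (σ n).2.bind (fun s => D.δ s (α n)) = some (ρ (n+1))
                rw [ih]
                simpa using hρs n
            intro k
            obtain ⟨m, hm, hmF⟩ := hρF k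
            exact ⟨m, hm, Or.inl ⟨ρ m, htrack m, hmF⟩⟩
  · rintro ⟨M, F, hMon, hLang⟩
    exact ⟨⟨M, hMon⟩, _, hLang⟩
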